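/- arXiv:2512.24710 — 2 statements merged into one kernel-verified Lean document; each statement's English description precedes it below -/
import Mathlib

section
/- (Khinchine's inequality) For each 0 < l < ∞ there exist constants C₁, C₂ > 0 depending only on l such that for all m ≥ 1 and all complex numbers b₁,…,b_m: C₁ (Σ_{k=1}^m |b_k|²)^{l/2} ≤ ∫_0^1 |Σ_{k=1}^m b_k r_k(t)|^l dt ≤ C₂ (Σ_{k=1}^m |b_k|²)^{l/2}. -/
open scoped BigOperators
open Finset MeasureTheory

noncomputable section

/-- The Rademacher functions on `[0,1]`: `rademacher k` is `r_{k+1}` of the paper,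
`r₁(t) = 1` if `0 ≤ t - ⌊t⌋ < 1/2` and `-1` otherwise, and `r_{k+1}(t) = r₁(2^k t)`. -/
def rademacher (k : ℕ) (t : ℝ) : ℝ :=
  if Int.fract (2 ^ k * t) < 1 / 2 then 1 else -1

/-- The value of `rademacher k` on the dyadic interval `[j/2^m, (j+1)/2^m)`. -/
def signj (m k j : ℕ) : ℝ :=
  if 2 * (j % 2 ^ (m - k)) < 2 ^ (m - k) then 1 else -1

lemma signj_sq (m k j : ℕ) : signj m k j ^ 2 = 1 := by
  unfold signj; split_ifs <;> norm_num

lemma rademacher_eq_of_mem {k m : ℕ} (hk : k < m) (j : ℕ) {t : ℝ}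
    (h1 : (j : ℝ) / 2 ^ m ≤ t) (h2 : t < ((j : ℝ) + 1) / 2 ^ m) :
    rademacher k t = signj m k j := by
  obtain ⟨d, rfl⟩ : ∃ d, m = k + d := ⟨m - k, by omega⟩
  have hd : 1 ≤ d := by omega
  have hdk : k + d - k = d := by omega
  rw [rademacher, signj, hdk]
  set r : ℕ := j % 2 ^ d with hrdef
  have hrlt : r < 2 ^ d := Nat.mod_lt _ (by positivity)
  set u : ℝ := 2 ^ k * t - (j : ℝ) / 2 ^ d with hudef
  have hpow : (2 : ℝ) ^ (k + d) = 2 ^ k * 2 ^ d := by rw [pow_add]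
  have h2d : (0:ℝ) < 2 ^ d := by positivity
  have h2k : (0:ℝ) < 2 ^ k := by positivity
  have hu0 : 0 ≤ u := by
    have h := mul_le_mul_of_nonneg_right h1 (le_of_lt h2k)
    rw [hpow] at h
    have hj : (j : ℝ) / (2 ^ k * 2 ^ d) * 2 ^ k = (j:ℝ) / 2 ^ d := by
      field_simp
    rw [hj] at h
    rw [hudef]; nlinarith
  have hu1 : u < 1 / 2 ^ d := by
    have h := mul_lt_mul_of_pos_right h2 h2k
    rw [hpow] at h
    have hj : ((j : ℝ) + 1) / (2 ^ k * 2 ^ d) * 2 ^ k = ((j:ℝ)+1) / 2 ^ d := by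
      field_simp
    rw [hj] at h
    have hsplit : ((j:ℝ)+1)/2^d = (j:ℝ)/2^d + 1/2^d := by ring
    rw [hsplit] at h
    rw [hudef]; nlinarith
  have hjsplit : (j : ℝ) / 2 ^ d = ((j / 2 ^ d : ℕ) : ℝ) + (r : ℝ) / 2 ^ d := by
    have hdm := Nat.div_add_mod j (2 ^ d)
    have hcast : (j : ℝ) = ((2:ℝ) ^ d) * ((j / 2 ^ d : ℕ) : ℝ) + (r : ℝ) := by
      rw [hrdef]
      conv_lhs => rw [← hdm]
      push_cast
      ring
    rw [hcast]; field_simp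
  have hrle : (r : ℝ) ≤ (2:ℝ) ^ d - 1 := by
    have : (r : ℝ) + 1 ≤ (2:ℝ)^d := by exact_mod_cast hrlt
    linarith
  have hfr : Int.fract (2 ^ k * t) = (r : ℝ) / 2 ^ d + u := by
    have ht : 2 ^ k * t = ((j / 2 ^ d : ℕ) : ℝ) + ((r : ℝ) / 2 ^ d + u) := by
      rw [hudef, hjsplit]; ring
    rw [ht, Int.fract_natCast_add, Int.fract_eq_self.2]
    refine ⟨by positivity, ?_⟩
    have : (r : ℝ) / 2 ^ d ≤ ((2:ℝ)^d - 1) / 2^d := (div_le_div_iff_of_pos_right h2d).2 hrle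
    calc (r : ℝ) / 2 ^ d + u < ((2:ℝ)^d - 1) / 2^d + 1 / 2^d := by linarith
      _ = 1 := by field_simp; ring
  rw [hfr]
  by_cases hcase : 2 * r < 2 ^ d
  · rw [if_pos hcase, if_pos]
    obtain ⟨e, he⟩ : ∃ e, 2 ^ d = 2 * e := ⟨2 ^ (d - 1), by rw [← pow_succ']; congr 1; omega⟩
    have h2r2 : 2 * r + 2 ≤ 2 ^ d := by omega
    have hr1 : (r : ℝ) + 1 ≤ (2:ℝ) ^ d / 2 := by
      have : ((2 * r + 2 : ℕ) : ℝ) ≤ ((2 ^ d : ℕ) : ℝ) := by exact_mod_cast h2r2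
      push_cast at this
      linarith
    have h1' : (r : ℝ) / 2^d + u < ((r:ℝ)+1) / 2^d := by rw [add_div]; linarith
    have h2' : ((r:ℝ)+1)/2^d ≤ ((2:ℝ)^d/2)/2^d := (div_le_div_iff_of_pos_right h2d).2 hr1
    have h3' : ((2:ℝ)^d/2)/2^d = 1/2 := by field_simp
    linarith
  · rw [if_neg hcase, if_neg]
    push_neg at hcase ⊢
    have h1' : (2:ℝ)^d ≤ 2 * (r:ℝ) := by exact_mod_cast hcase
    have h2' : 1/2 ≤ (r:ℝ)/2^d := by rw [div_le_div_iff₀ (by norm_num) h2d]; linarith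
    exact le_trans h2' (le_add_of_nonneg_right hu0)

lemma signj_succ_lt {k m : ℕ} (hk : k < m) (q b : ℕ) (hb : b < 2) :
    signj (m + 1) k (2 * q + b) = signj m k q := by
  obtain ⟨d, hd1, hd⟩ : ∃ d, 1 ≤ d ∧ m - k = d := ⟨m - k, by omega, rfl⟩
  have hd' : m + 1 - k = d + 1 := by omega
  rw [signj, signj, hd, hd']
  obtain ⟨e, he⟩ : ∃ e, 2 ^ d = 2 * e := ⟨2 ^ (d - 1), by rw [← pow_succ']; congr 1; omega⟩
  have hmod : (2 * q + b) % 2 ^ (d + 1) = 2 * (q % 2 ^ d) + b := by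
    have h1 : 2 * q + b = 2 ^ (d + 1) * (q / 2 ^ d) + (2 * (q % 2 ^ d) + b) := by
      conv_lhs => rw [← Nat.div_add_mod q (2 ^ d)]
      rw [pow_succ]
      ring
    rw [h1, Nat.mul_add_mod]
    exact Nat.mod_eq_of_lt (by have := Nat.mod_lt q (show 0 < 2 ^ d by positivity); rw [pow_succ]; omega)
  rw [hmod]
  have hqlt := Nat.mod_lt q (show 0 < 2 ^ d by positivity)
  have : (2 * (2 * (q % 2 ^ d) + b) < 2 ^ (d + 1)) ↔ (2 * (q % 2 ^ d) < 2 ^ d) := by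
    rw [pow_succ]
    omega
  simp only [this]

lemma signj_succ_self0 (m q : ℕ) : signj (m + 1) m (2 * q) = 1 := by
  rw [signj, if_pos]
  have h1 : m + 1 - m = 1 := by omega
  rw [h1]
  omega

lemma signj_succ_self1 (m q : ℕ) : signj (m + 1) m (2 * q + 1) = -1 := by
  rw [signj, if_neg]
  have h1 : m + 1 - m = 1 := by omega
  rw [h1]
  omega

lemma sum_range_two_mul (n : ℕ) (f : ℕ → ℝ) :
    ∑ j ∈ range (2 * n), f j = ∑ q ∈ range n, (f (2 * q) + f (2 * q + 1)) := by
  induction n with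
  | zero => simp
  | succ n ih =>
    have h : 2 * (n + 1) = (2 * n + 1) + 1 := by ring
    rw [h, sum_range_succ, sum_range_succ, ih, sum_range_succ, add_assoc]

/-- Second moment of a real Rademacher sum. -/
lemma disc_sq (a : ℕ → ℝ) (m : ℕ) :
    ∑ j ∈ range (2 ^ m), (∑ k ∈ range m, a k * signj m k j) ^ 2
      = 2 ^ m * ∑ k ∈ range m, (a k) ^ 2 := by
  induction m with
  | zero => simp
  | succ m ih =>
    have h2 : (2:ℕ) ^ (m + 1) = 2 * 2 ^ m := by ring
    rw [h2, sum_range_two_mul]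
    have key : ∀ q ∈ range (2 ^ m),
        (∑ k ∈ range (m + 1), a k * signj (m + 1) k (2 * q)) ^ 2 +
          (∑ k ∈ range (m + 1), a k * signj (m + 1) k (2 * q + 1)) ^ 2
        = 2 * (∑ k ∈ range m, a k * signj m k q) ^ 2 + 2 * (a m) ^ 2 := by
      intro q _
      rw [sum_range_succ, sum_range_succ]
      have e0 : ∑ k ∈ range m, a k * signj (m + 1) k (2 * q)
          = ∑ k ∈ range m, a k * signj m k q :=
        Finset.sum_congr rfl fun k hk => by
          rw [show 2 * q = 2 * q + 0 by ring, signj_succ_lt (mem_range.mp hk) q 0 (by norm_num)]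
      have e1 : ∑ k ∈ range m, a k * signj (m + 1) k (2 * q + 1)
          = ∑ k ∈ range m, a k * signj m k q :=
        Finset.sum_congr rfl fun k hk => by
          rw [signj_succ_lt (mem_range.mp hk) q 1 (by norm_num)]
      rw [e0, e1, signj_succ_self0, signj_succ_self1]
      ring
    rw [Finset.sum_congr rfl key, Finset.sum_add_distrib, ← Finset.mul_sum, ih,
      Finset.sum_const, card_range, sum_range_succ]
    push_cast
    ring

/-- Exponential moment (subgaussian) bound for a real Rademacher sum. -/
lemma disc_exp (a : ℕ → ℝ) (m : ℕ) :
    ∑ j ∈ range (2 ^ m), Real.exp (∑ k ∈ range m, a k * signj m k j)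
      ≤ 2 ^ m * Real.exp (∑ k ∈ range m, (a k) ^ 2 / 2) := by
  induction m with
  | zero => simp
  | succ m ih =>
    have h2 : (2:ℕ) ^ (m + 1) = 2 * 2 ^ m := by ring
    rw [h2, sum_range_two_mul]
    have key : ∀ q ∈ range (2 ^ m),
        Real.exp (∑ k ∈ range (m + 1), a k * signj (m + 1) k (2 * q)) +
          Real.exp (∑ k ∈ range (m + 1), a k * signj (m + 1) k (2 * q + 1))
        = Real.exp (∑ k ∈ range m, a k * signj m k q) * (2 * Real.cosh (a m)) := by
      intro q _
      rw [sum_range_succ, sum_range_succ]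
      have e0 : ∑ k ∈ range m, a k * signj (m + 1) k (2 * q)
          = ∑ k ∈ range m, a k * signj m k q :=
        Finset.sum_congr rfl fun k hk => by
          rw [show 2 * q = 2 * q + 0 by ring, signj_succ_lt (mem_range.mp hk) q 0 (by norm_num)]
      have e1 : ∑ k ∈ range m, a k * signj (m + 1) k (2 * q + 1)
          = ∑ k ∈ range m, a k * signj m k q :=
        Finset.sum_congr rfl fun k hk => by
          rw [signj_succ_lt (mem_range.mp hk) q 1 (by norm_num)]
      rw [e0, e1, signj_succ_self0, signj_succ_self1]
      simp only [mul_one, mul_neg_one]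
      rw [Real.cosh_eq, Real.exp_add, Real.exp_add]
      ring
    rw [Finset.sum_congr rfl key, ← Finset.sum_mul]
    have hcosh : 2 * Real.cosh (a m) ≤ 2 * Real.exp ((a m) ^ 2 / 2) := by
      have := Real.cosh_le_exp_half_sq (a m)
      linarith
    have hsum0 : (0:ℝ) ≤ ∑ j ∈ range (2 ^ m), Real.exp (∑ k ∈ range m, a k * signj m k j) :=
      Finset.sum_nonneg fun j _ => (Real.exp_pos _).le
    calc (∑ j ∈ range (2 ^ m), Real.exp (∑ k ∈ range m, a k * signj m k j))
          * (2 * Real.cosh (a m))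
        ≤ (2 ^ m * Real.exp (∑ k ∈ range m, (a k) ^ 2 / 2)) * (2 * Real.exp ((a m) ^ 2 / 2)) := by
          apply mul_le_mul ih hcosh (by positivity) (by positivity)
      _ = 2 ^ (m + 1) * Real.exp (∑ k ∈ range (m + 1), (a k) ^ 2 / 2) := by
          rw [sum_range_succ, Real.exp_add]
          ring

lemma norm_sq_complex (z : ℂ) : ‖z‖ ^ 2 = z.re ^ 2 + z.im ^ 2 := by
  rw [Complex.sq_norm, Complex.normSq_apply]
  ring

lemma re_S (B : ℕ → ℂ) (m j : ℕ) :
    (∑ k ∈ range m, B k * (signj m k j : ℂ)).re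
      = ∑ k ∈ range m, (B k).re * signj m k j := by
  rw [Complex.re_sum]
  exact sum_congr rfl fun k _ => by simp [Complex.mul_re]

lemma im_S (B : ℕ → ℂ) (m j : ℕ) :
    (∑ k ∈ range m, B k * (signj m k j : ℂ)).im
      = ∑ k ∈ range m, (B k).im * signj m k j := by
  rw [Complex.im_sum]
  exact sum_congr rfl fun k _ => by simp [Complex.mul_im]

/-- Second moment of a complex Rademacher sum. -/
lemma disc_norm_sq (B : ℕ → ℂ) (m : ℕ) :
    ∑ j ∈ range (2 ^ m), ‖∑ k ∈ range m, B k * (signj m k j : ℂ)‖ ^ 2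
      = 2 ^ m * ∑ k ∈ range m, ‖B k‖ ^ 2 := by
  have h : ∀ j ∈ range (2 ^ m),
      ‖∑ k ∈ range m, B k * (signj m k j : ℂ)‖ ^ 2
        = (∑ k ∈ range m, (B k).re * signj m k j) ^ 2
          + (∑ k ∈ range m, (B k).im * signj m k j) ^ 2 := by
    intro j _
    rw [norm_sq_complex, re_S, im_S]
  rw [Finset.sum_congr rfl h, Finset.sum_add_distrib, disc_sq, disc_sq, ← mul_add,
    ← Finset.sum_add_distrib]
  congr 1
  exact (sum_congr rfl fun k _ => (norm_sq_complex (B k)).symm).symm ▸ rfl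

lemma abs_rpow_le_aux (p : ℝ) (hp : 0 < p) (t : ℝ) :
    |t| ^ p ≤ 1 + Nat.factorial (Nat.ceil p) * (Real.exp t + Real.exp (-t)) := by
  set n := Nat.ceil p with hn
  have hexp : Real.exp |t| ≤ Real.exp t + Real.exp (-t) := by
    rcases abs_cases t with ⟨h, _⟩ | ⟨h, _⟩ <;> rw [h] <;>
      nlinarith [Real.exp_pos t, Real.exp_pos (-t)]
  by_cases h1 : |t| ≤ 1
  · have ha : |t| ^ p ≤ 1 := Real.rpow_le_one (abs_nonneg t) h1 hp.le
    have hb : (0:ℝ) ≤ (n.factorial : ℝ) * (Real.exp t + Real.exp (-t)) := by positivity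
    linarith
  · push_neg at h1
    have h2 : |t| ^ p ≤ |t| ^ (n : ℝ) :=
      Real.rpow_le_rpow_of_exponent_le h1.le (Nat.le_ceil p)
    have h3 : |t| ^ (n : ℝ) = |t| ^ (n : ℕ) := Real.rpow_natCast _ _
    have h4 : |t| ^ (n : ℕ) ≤ (n.factorial : ℝ) * Real.exp |t| := by
      have hd := Real.pow_div_factorial_le_exp (x := |t|) (abs_nonneg t) n
      have hf : (0:ℝ) < (n.factorial : ℝ) := by positivity
      calc |t| ^ (n : ℕ) = (|t| ^ n / (n.factorial : ℝ)) * (n.factorial : ℝ) := by field_simp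
        _ ≤ Real.exp |t| * (n.factorial : ℝ) := mul_le_mul_of_nonneg_right hd hf.le
        _ = (n.factorial : ℝ) * Real.exp |t| := by ring
    have h5 : (n.factorial : ℝ) * Real.exp |t| ≤ (n.factorial : ℝ) * (Real.exp t + Real.exp (-t)) :=
      mul_le_mul_of_nonneg_left hexp (by positivity)
    linarith [h3 ▸ h2]

/-- Moment bound for a real Rademacher sum with `∑ a² ≤ 1`. -/
lemma disc_rpow_le (p : ℝ) (hp : 0 < p) (a : ℕ → ℝ) (m : ℕ)
    (ha : ∑ k ∈ range m, (a k) ^ 2 ≤ 1) :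
    ∑ j ∈ range (2 ^ m), |∑ k ∈ range m, a k * signj m k j| ^ p
      ≤ 2 ^ m * (1 + 2 * (Nat.factorial (Nat.ceil p) : ℝ) * Real.exp (1 / 2)) := by
  have hhalf : ∑ k ∈ range m, (a k) ^ 2 / 2 ≤ 1 / 2 := by
    rw [← Finset.sum_div]
    linarith
  have hEbound : Real.exp (∑ k ∈ range m, (a k) ^ 2 / 2) ≤ Real.exp (1 / 2) :=
    Real.exp_le_exp.2 hhalf
  have hpos : ∀ j ∈ range (2 ^ m), |∑ k ∈ range m, a k * signj m k j| ^ p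
      ≤ 1 + (Nat.factorial (Nat.ceil p) : ℝ) *
        (Real.exp (∑ k ∈ range m, a k * signj m k j)
          + Real.exp (-(∑ k ∈ range m, a k * signj m k j))) :=
    fun j _ => abs_rpow_le_aux p hp _
  have hplus : ∑ j ∈ range (2 ^ m), Real.exp (∑ k ∈ range m, a k * signj m k j)
      ≤ 2 ^ m * Real.exp (1 / 2) :=
    le_trans (disc_exp a m) (by
      apply mul_le_mul_of_nonneg_left hEbound (by positivity))
  have hminus : ∑ j ∈ range (2 ^ m), Real.exp (-(∑ k ∈ range m, a k * signj m k j))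
      ≤ 2 ^ m * Real.exp (1 / 2) := by
    have hd := disc_exp (fun k => -a k) m
    simp only [neg_mul, neg_sq] at hd
    rw [show (fun j => Real.exp (-(∑ k ∈ range m, a k * signj m k j)))
        = fun j => Real.exp (∑ k ∈ range m, -(a k * signj m k j)) from
      funext fun j => by rw [Finset.sum_neg_distrib]]
    exact le_trans hd (by apply mul_le_mul_of_nonneg_left hEbound (by positivity))
  calc ∑ j ∈ range (2 ^ m), |∑ k ∈ range m, a k * signj m k j| ^ p
      ≤ ∑ j ∈ range (2 ^ m), (1 + (Nat.factorial (Nat.ceil p) : ℝ) *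
          (Real.exp (∑ k ∈ range m, a k * signj m k j)
            + Real.exp (-(∑ k ∈ range m, a k * signj m k j)))) :=
        Finset.sum_le_sum hpos
    _ = 2 ^ m + (Nat.factorial (Nat.ceil p) : ℝ) *
          ((∑ j ∈ range (2 ^ m), Real.exp (∑ k ∈ range m, a k * signj m k j))
            + (∑ j ∈ range (2 ^ m), Real.exp (-(∑ k ∈ range m, a k * signj m k j)))) := by
        rw [Finset.sum_add_distrib, Finset.sum_const, card_range, ← Finset.mul_sum,
          Finset.sum_add_distrib]
        simp
    _ ≤ 2 ^ m + (Nat.factorial (Nat.ceil p) : ℝ) * (2 ^ m * Real.exp (1 / 2) + 2 ^ m * Real.exp (1 / 2)) := by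
        have : (0:ℝ) ≤ (Nat.factorial (Nat.ceil p) : ℝ) := by positivity
        nlinarith [hplus, hminus]
    _ = 2 ^ m * (1 + 2 * (Nat.factorial (Nat.ceil p) : ℝ) * Real.exp (1 / 2)) := by ring

lemma norm_rpow_le_aux (p : ℝ) (hp : 0 < p) (z : ℂ) :
    ‖z‖ ^ p ≤ 2 ^ p * (|z.re| ^ p + |z.im| ^ p) := by
  have h1 : ‖z‖ ≤ |z.re| + |z.im| := Complex.norm_le_abs_re_add_abs_im z
  have h2 : |z.re| + |z.im| ≤ 2 * max |z.re| |z.im| := by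
    have := le_max_left |z.re| |z.im|
    have := le_max_right |z.re| |z.im|
    linarith
  have h3 : ‖z‖ ^ p ≤ (2 * max |z.re| |z.im|) ^ p :=
    Real.rpow_le_rpow (norm_nonneg z) (h1.trans h2) hp.le
  have h4 : (2 * max |z.re| |z.im|) ^ p = 2 ^ p * (max |z.re| |z.im|) ^ p :=
    Real.mul_rpow (by norm_num) (le_trans (abs_nonneg _) (le_max_left _ _))
  have h5 : (max |z.re| |z.im|) ^ p ≤ |z.re| ^ p + |z.im| ^ p := by
    rcases max_cases |z.re| |z.im| with ⟨h, _⟩ | ⟨h, _⟩ <;> rw [h] <;>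
      nlinarith [Real.rpow_nonneg (abs_nonneg z.re) p, Real.rpow_nonneg (abs_nonneg z.im) p]
  calc ‖z‖ ^ p ≤ (2 * max |z.re| |z.im|) ^ p := h3
    _ = 2 ^ p * (max |z.re| |z.im|) ^ p := h4
    _ ≤ 2 ^ p * (|z.re| ^ p + |z.im| ^ p) := by
        apply mul_le_mul_of_nonneg_left h5 (by positivity)

/-- The constant for the discrete upper bound. -/
def Kup (p : ℝ) : ℝ := 2 ^ p * 2 * (1 + 2 * (Nat.factorial (Nat.ceil p) : ℝ) * Real.exp (1 / 2))

lemma Kup_pos (p : ℝ) : 0 < Kup p := by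
  unfold Kup
  positivity

/-- Moment bound for a complex Rademacher sum with `∑ ‖B‖² ≤ 1`. -/
lemma disc_norm_rpow_le (p : ℝ) (hp : 0 < p) (B : ℕ → ℂ) (m : ℕ)
    (hB : ∑ k ∈ range m, ‖B k‖ ^ 2 ≤ 1) :
    ∑ j ∈ range (2 ^ m), ‖∑ k ∈ range m, B k * (signj m k j : ℂ)‖ ^ p
      ≤ 2 ^ m * Kup p := by
  have hre2 : ∑ k ∈ range m, ((B k).re) ^ 2 ≤ 1 :=
    le_trans (Finset.sum_le_sum fun k _ => by
      rw [norm_sq_complex]; nlinarith [sq_nonneg (B k).im]) hB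
  have him2 : ∑ k ∈ range m, ((B k).im) ^ 2 ≤ 1 :=
    le_trans (Finset.sum_le_sum fun k _ => by
      rw [norm_sq_complex]; nlinarith [sq_nonneg (B k).re]) hB
  have hre := disc_rpow_le p hp (fun k => (B k).re) m hre2
  have him := disc_rpow_le p hp (fun k => (B k).im) m him2
  calc ∑ j ∈ range (2 ^ m), ‖∑ k ∈ range m, B k * (signj m k j : ℂ)‖ ^ p
      ≤ ∑ j ∈ range (2 ^ m), 2 ^ p *
          (|∑ k ∈ range m, (B k).re * signj m k j| ^ p
            + |∑ k ∈ range m, (B k).im * signj m k j| ^ p) := by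
        apply Finset.sum_le_sum
        intro j _
        have := norm_rpow_le_aux p hp (∑ k ∈ range m, B k * (signj m k j : ℂ))
        rwa [re_S, im_S] at this
    _ = 2 ^ p * ((∑ j ∈ range (2 ^ m), |∑ k ∈ range m, (B k).re * signj m k j| ^ p)
          + (∑ j ∈ range (2 ^ m), |∑ k ∈ range m, (B k).im * signj m k j| ^ p)) := by
        rw [← Finset.mul_sum, Finset.sum_add_distrib]
    _ ≤ 2 ^ p * (2 ^ m * (1 + 2 * (Nat.factorial (Nat.ceil p) : ℝ) * Real.exp (1 / 2))
          + 2 ^ m * (1 + 2 * (Nat.factorial (Nat.ceil p) : ℝ) * Real.exp (1 / 2))) := by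
        apply mul_le_mul_of_nonneg_left (add_le_add hre him) (by positivity)
    _ = 2 ^ m * Kup p := by
        unfold Kup
        ring

lemma sq_rpow_half (x : ℝ) (hx : 0 ≤ x) (l : ℝ) : (x ^ 2) ^ (l / 2) = x ^ l := by
  rw [← Real.rpow_natCast x 2, ← Real.rpow_mul hx]
  congr 1
  push_cast
  ring

def Klow (l : ℝ) : ℝ := min 1 (Kup (4 - l))⁻¹

lemma Klow_pos (l : ℝ) : 0 < Klow l := lt_min one_pos (inv_pos.2 (Kup_pos _))

lemma Klow_le_one (l : ℝ) : Klow l ≤ 1 := min_le_left _ _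

/-- Discrete lower bound in the normalized case `∑ ‖B‖² = 1`. -/
lemma disc_lower_norm (l : ℝ) (hl : 0 < l) (m : ℕ) (B : ℕ → ℂ)
    (hB : ∑ k ∈ range m, ‖B k‖ ^ 2 = 1) :
    2 ^ m * Klow l ≤ ∑ j ∈ range (2 ^ m), ‖∑ k ∈ range m, B k * (signj m k j : ℂ)‖ ^ l := by
  set S : ℕ → ℂ := fun j => ∑ k ∈ range m, B k * (signj m k j : ℂ) with hS
  have hSsum : ∑ j ∈ range (2 ^ m), ‖S j‖ ^ 2 = 2 ^ m := by
    rw [hS, disc_norm_sq, hB, mul_one]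
  have h2m : (0:ℝ) < 2 ^ m := by positivity
  rcases le_or_gt 2 l with h2 | h2
  · -- Jensen's inequality
    have hw' : ∑ _j ∈ range (2 ^ m), ((2:ℝ) ^ m)⁻¹ = 1 := by
      rw [sum_const, card_range, nsmul_eq_mul]
      push_cast
      field_simp
    have hj := Real.rpow_arith_mean_le_arith_mean_rpow (range (2 ^ m))
      (fun _ => ((2:ℝ) ^ m)⁻¹) (fun j => ‖S j‖ ^ 2)
      (fun i _ => by positivity) hw' (fun i _ => by positivity)
      (by linarith : (1:ℝ) ≤ l / 2)
    have e1 : ∑ j ∈ range (2 ^ m), ((2:ℝ) ^ m)⁻¹ * ‖S j‖ ^ 2 = 1 := by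
      rw [← Finset.mul_sum, hSsum]
      field_simp
    rw [e1, Real.one_rpow] at hj
    have e2 : ∑ j ∈ range (2 ^ m), ((2:ℝ) ^ m)⁻¹ * (‖S j‖ ^ 2) ^ (l / 2)
        = ((2:ℝ) ^ m)⁻¹ * ∑ j ∈ range (2 ^ m), ‖S j‖ ^ l := by
      rw [← Finset.mul_sum]
      congr 1
      exact Finset.sum_congr rfl fun j _ => sq_rpow_half _ (norm_nonneg _) l
    rw [e2] at hj
    have : 2 ^ m ≤ ∑ j ∈ range (2 ^ m), ‖S j‖ ^ l := by
      have := mul_le_mul_of_nonneg_left hj h2m.le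
      rw [mul_one, ← mul_assoc, mul_inv_cancel₀ h2m.ne', one_mul] at this
      exact this
    calc (2:ℝ) ^ m * Klow l ≤ 2 ^ m * 1 :=
          mul_le_mul_of_nonneg_left (Klow_le_one l) h2m.le
      _ = 2 ^ m := mul_one _
      _ ≤ _ := this
  · -- Cauchy–Schwarz interpolation
    have h4l : 0 < 4 - l := by linarith
    have hCS := Finset.sum_mul_sq_le_sq_mul_sq (range (2 ^ m))
      (fun j => ‖S j‖ ^ (l / 2)) (fun j => ‖S j‖ ^ ((4 - l) / 2))
    have efg : ∀ j, ‖S j‖ ^ (l / 2) * ‖S j‖ ^ ((4 - l) / 2) = ‖S j‖ ^ 2 := by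
      intro j
      have hne : l / 2 + (4 - l) / 2 ≠ 0 := by
        rw [show l / 2 + (4 - l) / 2 = (2:ℝ) by ring]
        norm_num
      rw [← Real.rpow_add' (norm_nonneg _) hne,
        show l / 2 + (4 - l) / 2 = ((2:ℕ):ℝ) by push_cast; ring,
        Real.rpow_natCast]
    have ef2 : ∀ j, (‖S j‖ ^ (l / 2)) ^ 2 = ‖S j‖ ^ l := by
      intro j
      rw [← Real.rpow_natCast (‖S j‖ ^ (l / 2)) 2, ← Real.rpow_mul (norm_nonneg _)]
      congr 1
      push_cast
      ring
    have eg2 : ∀ j, (‖S j‖ ^ ((4 - l) / 2)) ^ 2 = ‖S j‖ ^ (4 - l) := by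
      intro j
      rw [← Real.rpow_natCast (‖S j‖ ^ ((4 - l) / 2)) 2, ← Real.rpow_mul (norm_nonneg _)]
      congr 1
      push_cast
      ring
    simp only [efg, ef2, eg2] at hCS
    rw [hSsum] at hCS
    have hup : ∑ j ∈ range (2 ^ m), ‖S j‖ ^ (4 - l) ≤ 2 ^ m * Kup (4 - l) :=
      disc_norm_rpow_le (4 - l) h4l B m (le_of_eq hB)
    have hA0 : (0:ℝ) ≤ ∑ j ∈ range (2 ^ m), ‖S j‖ ^ l :=
      Finset.sum_nonneg fun j _ => Real.rpow_nonneg (norm_nonneg _) _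
    have hfinal : ((2:ℝ) ^ m) ^ 2 ≤ (∑ j ∈ range (2 ^ m), ‖S j‖ ^ l) * (2 ^ m * Kup (4 - l)) :=
      le_trans hCS (mul_le_mul_of_nonneg_left hup hA0)
    have hKpos := Kup_pos (4 - l)
    have h1 : 2 ^ m * (Kup (4 - l))⁻¹ ≤ ∑ j ∈ range (2 ^ m), ‖S j‖ ^ l := by
      have h2 : (2:ℝ) ^ m ≤ (∑ j ∈ range (2 ^ m), ‖S j‖ ^ l) * Kup (4 - l) := by
        apply le_of_mul_le_mul_right _ h2m
        calc (2:ℝ) ^ m * 2 ^ m = ((2:ℝ) ^ m) ^ 2 := by ring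
          _ ≤ (∑ j ∈ range (2 ^ m), ‖S j‖ ^ l) * (2 ^ m * Kup (4 - l)) := hfinal
          _ = (∑ j ∈ range (2 ^ m), ‖S j‖ ^ l) * Kup (4 - l) * 2 ^ m := by ring
      rw [show (2:ℝ) ^ m * (Kup (4 - l))⁻¹ = 2 ^ m / Kup (4 - l) by ring,
        div_le_iff₀ hKpos]
      exact h2
    calc (2:ℝ) ^ m * Klow l ≤ 2 ^ m * (Kup (4 - l))⁻¹ :=
          mul_le_mul_of_nonneg_left (min_le_right _ _) h2m.le
      _ ≤ _ := h1

/-- Discrete Khinchine inequality, with scaling. -/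
lemma disc_khinchine (l : ℝ) (hl : 0 < l) (m : ℕ) (B : ℕ → ℂ) :
    Klow l * (∑ k ∈ range m, ‖B k‖ ^ 2) ^ (l / 2) * 2 ^ m
        ≤ ∑ j ∈ range (2 ^ m), ‖∑ k ∈ range m, B k * (signj m k j : ℂ)‖ ^ l ∧
      ∑ j ∈ range (2 ^ m), ‖∑ k ∈ range m, B k * (signj m k j : ℂ)‖ ^ l
        ≤ Kup l * (∑ k ∈ range m, ‖B k‖ ^ 2) ^ (l / 2) * 2 ^ m := by
  set s := ∑ k ∈ range m, ‖B k‖ ^ 2 with hsdef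
  have hs0 : 0 ≤ s := Finset.sum_nonneg fun k _ => sq_nonneg _
  rcases eq_or_lt_of_le hs0 with hs | hs
  · -- all coefficients vanish
    have hBk : ∀ k ∈ range m, B k = 0 := by
      intro k hk
      have := (Finset.sum_eq_zero_iff_of_nonneg (fun k _ => sq_nonneg ‖B k‖)).1 hs.symm k hk
      have : ‖B k‖ = 0 := by nlinarith [norm_nonneg (B k)]
      exact norm_eq_zero.1 this
    have hSz : ∀ j ∈ range (2 ^ m), ‖∑ k ∈ range m, B k * (signj m k j : ℂ)‖ ^ l = 0 := by
      intro j _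
      rw [Finset.sum_congr rfl fun k hk => by rw [hBk k hk, zero_mul]]
      rw [Finset.sum_const_zero, norm_zero, Real.zero_rpow hl.ne']
    rw [Finset.sum_congr rfl hSz, Finset.sum_const_zero, ← hs,
      Real.zero_rpow (by positivity : l / 2 ≠ 0)]
    norm_num
  · -- normalize
    set c : ℝ := s ^ (-(1:ℝ) / 2) with hcdef
    have hc : 0 < c := Real.rpow_pos_of_pos hs _
    have hc2 : c ^ 2 = s⁻¹ := by
      rw [hcdef, ← Real.rpow_natCast (s ^ (-(1:ℝ) / 2)) 2, ← Real.rpow_mul hs0,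
        show -(1:ℝ) / 2 * ((2:ℕ):ℝ) = -1 by push_cast; ring, Real.rpow_neg_one]
    set B' : ℕ → ℂ := fun k => (c : ℂ) * B k with hB'def
    have hB'1 : ∑ k ∈ range m, ‖B' k‖ ^ 2 = 1 := by
      rw [hB'def]
      simp only [norm_mul, Complex.norm_real, Real.norm_eq_abs, abs_of_pos hc, mul_pow]
      rw [← Finset.mul_sum, ← hsdef, hc2, inv_mul_cancel₀ hs.ne']
    have hS' : ∀ j, ∑ k ∈ range m, B' k * (signj m k j : ℂ)
        = (c : ℂ) * ∑ k ∈ range m, B k * (signj m k j : ℂ) := by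
      intro j
      rw [Finset.mul_sum]
      exact Finset.sum_congr rfl fun k _ => by rw [hB'def]; ring
    have hnorm' : ∀ j, ‖∑ k ∈ range m, B' k * (signj m k j : ℂ)‖ ^ l
        = c ^ l * ‖∑ k ∈ range m, B k * (signj m k j : ℂ)‖ ^ l := by
      intro j
      rw [hS' j, norm_mul, Complex.norm_real, Real.norm_eq_abs, abs_of_pos hc,
        Real.mul_rpow hc.le (norm_nonneg _)]
    have hsumeq : ∑ j ∈ range (2 ^ m), ‖∑ k ∈ range m, B' k * (signj m k j : ℂ)‖ ^ l
        = c ^ l * ∑ j ∈ range (2 ^ m), ‖∑ k ∈ range m, B k * (signj m k j : ℂ)‖ ^ l := by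
      rw [Finset.mul_sum]
      exact Finset.sum_congr rfl fun j _ => hnorm' j
    have hcl : c ^ l * s ^ (l / 2) = 1 := by
      rw [hcdef, ← Real.rpow_mul hs0, ← Real.rpow_add hs]
      rw [show -(1:ℝ) / 2 * l + l / 2 = 0 by ring, Real.rpow_zero]
    have hclpos : 0 < c ^ l := Real.rpow_pos_of_pos hc _
    have hspos : 0 < s ^ (l / 2) := Real.rpow_pos_of_pos hs _
    have hlow := disc_lower_norm l hl m B' hB'1
    have hupp := disc_norm_rpow_le l hl B' m (le_of_eq hB'1)
    rw [hsumeq] at hlow hupp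
    set T := ∑ j ∈ range (2 ^ m), ‖∑ k ∈ range m, B k * (signj m k j : ℂ)‖ ^ l with hTdef
    have hT : s ^ (l / 2) * (c ^ l * T) = T := by
      rw [← mul_assoc, mul_comm (s ^ (l / 2)) (c ^ l), hcl, one_mul]
    constructor
    · calc Klow l * s ^ (l / 2) * 2 ^ m = s ^ (l / 2) * (2 ^ m * Klow l) := by ring
        _ ≤ s ^ (l / 2) * (c ^ l * T) := mul_le_mul_of_nonneg_left hlow hspos.le
        _ = T := hT
    · calc T = s ^ (l / 2) * (c ^ l * T) := hT.symm
        _ ≤ s ^ (l / 2) * (2 ^ m * Kup l) := mul_le_mul_of_nonneg_left hupp hspos.le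
        _ = Kup l * s ^ (l / 2) * 2 ^ m := by ring

lemma khinchine_reduction (m : ℕ) (B : ℕ → ℂ) (l : ℝ) :
    ∫ t in Set.Ioc (0 : ℝ) 1, ‖∑ k ∈ range m, B k * (rademacher k t : ℂ)‖ ^ l
      = (∑ j ∈ range (2 ^ m), ‖∑ k ∈ range m, B k * (signj m k j : ℂ)‖ ^ l) / 2 ^ m := by
  set f : ℝ → ℝ := fun t => ‖∑ k ∈ range m, B k * (rademacher k t : ℂ)‖ ^ l with hf
  set v : ℕ → ℝ := fun j => ‖∑ k ∈ range m, B k * (signj m k j : ℂ)‖ ^ l with hv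
  set a : ℕ → ℝ := fun i => (i : ℝ) / 2 ^ m with ha
  have h2m : (0:ℝ) < 2 ^ m := by positivity
  have hale : ∀ i : ℕ, a i < a (i + 1) := by
    intro i
    rw [ha]
    rw [div_lt_div_iff₀ h2m h2m]
    push_cast
    nlinarith [h2m]
  have hstep : ∀ j : ℕ, ∀ t : ℝ, a j ≤ t → t < a (j + 1) → f t = v j := by
    intro j t h1 h2
    have h2' : t < ((j : ℝ) + 1) / 2 ^ m := by
      rw [ha] at h2
      push_cast at h2
      exact h2
    have hsum : ∑ k ∈ range m, B k * (rademacher k t : ℂ)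
        = ∑ k ∈ range m, B k * (signj m k j : ℂ) :=
      Finset.sum_congr rfl fun k hk => by
        rw [rademacher_eq_of_mem (mem_range.mp hk) j h1 h2']
    simp only [hf, hv, hsum]
  have hae : ∀ j : ℕ, f =ᵐ[volume.restrict (Set.Ioc (a j) (a (j + 1)))] fun _ => v j := by
    intro j
    rw [Filter.EventuallyEq, MeasureTheory.ae_iff]
    have hsub : {t : ℝ | ¬ f t = v j} ∩ Set.Ioc (a j) (a (j + 1)) ⊆ {a (j + 1)} := by
      rintro t ⟨hne, ht1, ht2⟩
      rcases lt_or_eq_of_le ht2 with h | h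
      · exact absurd (hstep j t ht1.le h) hne
      · exact h
    rw [Measure.restrict_apply' measurableSet_Ioc]
    exact measure_mono_null hsub (Real.volume_singleton)
  have hii : ∀ j : ℕ, IntervalIntegrable f volume (a j) (a (j + 1)) := by
    intro j
    rw [intervalIntegrable_iff_integrableOn_Ioc_of_le (hale j).le]
    have hconst : IntegrableOn (fun _ => v j) (Set.Ioc (a j) (a (j + 1))) volume :=
      integrableOn_const measure_Ioc_lt_top.ne
    exact hconst.congr (hae j).symm
  have hpiece : ∀ j : ℕ, (∫ t in (a j)..(a (j + 1)), f t) = v j / 2 ^ m := by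
    intro j
    rw [intervalIntegral.integral_of_le (hale j).le,
      MeasureTheory.integral_congr_ae (hae j), setIntegral_const, measureReal_def, Real.volume_Ioc,
      ENNReal.toReal_ofReal (by linarith [hale j] : (0:ℝ) ≤ a (j + 1) - a j)]
    have : a (j + 1) - a j = 1 / 2 ^ m := by
      rw [ha]
      push_cast
      field_simp
      ring
    rw [this, smul_eq_mul]
    ring
  have hsum := intervalIntegral.sum_integral_adjacent_intervals (a := a) (n := 2 ^ m)
    (fun k _ => hii k)
  rw [Finset.sum_congr rfl (fun j _ => hpiece j)] at hsum
  have ha0 : a 0 = 0 := by rw [ha]; simp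
  have haN : a (2 ^ m) = 1 := by
    rw [ha]
    push_cast
    field_simp
  rw [ha0, haN, intervalIntegral.integral_of_le zero_le_one] at hsum
  rw [← hsum, ← Finset.sum_div]

/-- **Khinchine's inequality.** For every `0 < l < ∞` there are constants `C₁, C₂ > 0`
depending only on `l` such that for all `m` and all complex `b₁, …, b_m`,
`C₁ (∑ |b_k|²)^{l/2} ≤ ∫₀¹ |∑ b_k r_k(t)|^l dt ≤ C₂ (∑ |b_k|²)^{l/2}`. -/
theorem khinchine_inequality (l : ℝ) (hl : 0 < l) :
    ∃ C₁ > (0 : ℝ), ∃ C₂ > (0 : ℝ), ∀ (m : ℕ) (b : Fin m → ℂ),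
      C₁ * (∑ k, ‖b k‖ ^ (2 : ℝ)) ^ (l / 2) ≤
        (∫ t in Set.Ioc (0 : ℝ) 1, ‖∑ k : Fin m, b k * (rademacher k.1 t : ℂ)‖ ^ l) ∧
      (∫ t in Set.Ioc (0 : ℝ) 1, ‖∑ k : Fin m, b k * (rademacher k.1 t : ℂ)‖ ^ l) ≤
        C₂ * (∑ k, ‖b k‖ ^ (2 : ℝ)) ^ (l / 2) := by
  refine ⟨Klow l, Klow_pos l, Kup l, Kup_pos l, fun m b => ?_⟩
  have h2m : (0:ℝ) < 2 ^ m := by positivity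
  set B : ℕ → ℂ := fun k => if h : k < m then b ⟨k, h⟩ else 0 with hB
  have hBk : ∀ k : Fin m, B k.1 = b k := fun k => by
    rw [hB]
    simp [k.2]
  have hsum2 : (∑ k, ‖b k‖ ^ (2 : ℝ)) = ∑ k ∈ range m, ‖B k‖ ^ 2 := by
    rw [← Fin.sum_univ_eq_sum_range (fun k => ‖B k‖ ^ 2) m]
    refine Finset.sum_congr rfl fun k _ => ?_
    rw [hBk k, show (2:ℝ) = ((2:ℕ):ℝ) by norm_num, Real.rpow_natCast]
  have hint : ∀ t : ℝ, ∑ k : Fin m, b k * (rademacher k.1 t : ℂ)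
      = ∑ k ∈ range m, B k * (rademacher k t : ℂ) := by
    intro t
    rw [← Fin.sum_univ_eq_sum_range (fun k => B k * (rademacher k t : ℂ)) m]
    exact Finset.sum_congr rfl fun k _ => by rw [hBk k]
  have hred : (∫ t in Set.Ioc (0:ℝ) 1, ‖∑ k : Fin m, b k * (rademacher k.1 t : ℂ)‖ ^ l)
      = (∑ j ∈ range (2 ^ m), ‖∑ k ∈ range m, B k * (signj m k j : ℂ)‖ ^ l) / 2 ^ m := by
    simp only [hint]
    exact khinchine_reduction m B l
  obtain ⟨hlo, hup⟩ := disc_khinchine l hl m B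
  rw [hred, hsum2]
  constructor
  · rw [le_div_iff₀ h2m]
    exact hlo
  · rw [div_le_iff₀ h2m]
    exact hup
end
end

section
/- (Order bounded implies p-summing) Let X be a Banach space, p ≥ 1, and (Ω, Σ, m) a measure space. If T : X → L^p(Ω, m) is a bounded linear operator such that the function h(ω) = sup_{f ∈ B_X} |T f(ω)| belongs to L^p(Ω, m), then T is p-summing with π_p(T) ≤ ‖h‖_{L^p(Ω,m)}. -/
open scoped BigOperators ENNReal
open Finset MeasureTheory

noncomputable section

/-- `T` is `r`-summing with constant `C`: for every finite family `x₁, …, x_m` in `X`,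
`(∑ ‖T xₖ‖^r)^{1/r} ≤ C · sup_{g ∈ B_{X*}} (∑ |g(xₖ)|^r)^{1/r}`. -/
def SummingBound {X Y : Type*} [NormedAddCommGroup X] [NormedSpace ℝ X]
    [NormedAddCommGroup Y] [NormedSpace ℝ Y] (r : ℝ) (T : X →L[ℝ] Y) (C : ℝ) : Prop :=
  ∀ (m : ℕ) (x : Fin m → X),
    (∑ k, ‖T (x k)‖ ^ r) ^ (1 / r) ≤
      C * sSup {s : ℝ | ∃ g : X →L[ℝ] ℝ, ‖g‖ ≤ 1 ∧
        s = (∑ k, |g (x k)| ^ r) ^ (1 / r)}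

/-- `T` is `r`-summing. -/
def IsSummingOp {X Y : Type*} [NormedAddCommGroup X] [NormedSpace ℝ X]
    [NormedAddCommGroup Y] [NormedSpace ℝ Y] (r : ℝ) (T : X →L[ℝ] Y) : Prop :=
  ∃ C : ℝ, 0 ≤ C ∧ SummingBound r T C

/-- The `r`-summing norm `π_r(T)`, the least admissible constant. -/
def summingNorm {X Y : Type*} [NormedAddCommGroup X] [NormedSpace ℝ X]
    [NormedAddCommGroup Y] [NormedSpace ℝ Y] (r : ℝ) (T : X →L[ℝ] Y) : ℝ :=
  sInf {C : ℝ | 0 ≤ C ∧ SummingBound r T C}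

private lemma Lp_coeFn_sum {Ω : Type*} [MeasurableSpace Ω] {m : Measure Ω} {pe : ℝ≥0∞}
    {ι : Type*} (s : Finset ι) (F : ι → Lp ℝ pe m) :
    ⇑(∑ i ∈ s, F i) =ᵐ[m] fun ω => ∑ i ∈ s, F i ω := by
  induction s using Finset.cons_induction with
  | empty => simp only [Finset.sum_empty]; exact Lp.coeFn_zero ℝ pe m
  | cons a s ha ih =>
    rw [Finset.sum_cons]
    filter_upwards [Lp.coeFn_add (F a) (∑ i ∈ s, F i), ih] with ω h1 h2
    simp only [Finset.sum_cons, h1, Pi.add_apply, h2]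

/-- **Order bounded implies `p`-summing.** If `T : X → L^p(Ω, m)` is a bounded operator
and there is `h ∈ L^p(m)`, `h ≥ 0`, dominating `|T f|` a.e. for every `f` in the unit
ball of `X`, then `T` is `p`-summing with `π_p(T) ≤ ‖h‖_{L^p}`. -/
theorem orderBounded_implies_summing {X : Type*}
    [NormedAddCommGroup X] [NormedSpace ℝ X] [CompleteSpace X]
    {Ω : Type*} [MeasurableSpace Ω] (m : Measure Ω)
    {p : ℝ} (hp : 1 ≤ p) {pe : ℝ≥0∞} [Fact (1 ≤ pe)] (hpe : pe = ENNReal.ofReal p)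
    (T : X →L[ℝ] Lp ℝ pe m) (h : Ω → ℝ) (hpos : ∀ ω, 0 ≤ h ω) (hmeas : Measurable h)
    (hLp : Integrable (fun ω => h ω ^ p) m)
    (hdom : ∀ f : X, ‖f‖ ≤ 1 → ∀ᵐ ω ∂m, |(T f) ω| ≤ h ω) :
    IsSummingOp p T ∧ summingNorm p T ≤ (∫ ω, h ω ^ p ∂m) ^ (1 / p) := by
  have hp0 : (0:ℝ) < p := lt_of_lt_of_le one_pos hp
  have hpne : p ≠ 0 := hp0.ne'
  have hpe0 : pe ≠ 0 := by rw [hpe]; simpa using (ENNReal.ofReal_pos.mpr hp0).ne'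
  have hpetop : pe ≠ ∞ := by rw [hpe]; exact ENNReal.ofReal_ne_top
  have hper : pe.toReal = p := by rw [hpe, ENNReal.toReal_ofReal hp0.le]
  have hInt0 : 0 ≤ ∫ ω, h ω ^ p ∂m := integral_nonneg fun ω => Real.rpow_nonneg (hpos ω) p
  set C : ℝ := (∫ ω, h ω ^ p ∂m) ^ (1 / p) with hC
  have hC0 : 0 ≤ C := Real.rpow_nonneg hInt0 _
  -- Step 1: a.e. domination for general `f`.
  have step1 : ∀ f : X, ∀ᵐ ω ∂m, |(T f) ω| ≤ h ω * ‖f‖ := by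
    intro f
    rcases eq_or_ne f 0 with rfl | hf
    · have h0 : ⇑(T 0) =ᵐ[m] 0 := by rw [map_zero]; exact Lp.coeFn_zero ℝ pe m
      filter_upwards [h0] with ω hω
      rw [hω]
      simp
    · have hnf : (0:ℝ) < ‖f‖ := norm_pos_iff.mpr hf
      have h1 : ‖(‖f‖⁻¹ • f)‖ ≤ 1 := by
        rw [norm_smul, norm_inv, norm_norm, inv_mul_cancel₀ hnf.ne']
      have h3 : ⇑(T (‖f‖⁻¹ • f)) =ᵐ[m] fun ω => ‖f‖⁻¹ * (T f) ω := by
        rw [_root_.map_smul]; exact Lp.coeFn_smul _ _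
      filter_upwards [hdom _ h1, h3] with ω hω1 hω2
      rw [hω2] at hω1
      calc |(T f) ω| = |‖f‖⁻¹ * (T f) ω| * ‖f‖ := by
            rw [abs_mul, abs_inv, abs_of_pos hnf]; field_simp
        _ ≤ h ω * ‖f‖ := mul_le_mul_of_nonneg_right hω1 hnf.le
  have key : SummingBound p T C := by
    intro n x
    set c : Fin n → Ω → ℝ := fun k => ⇑(T (x k)) with hcdef
    set Φ := {s : ℝ | ∃ g : X →L[ℝ] ℝ, ‖g‖ ≤ 1 ∧
        s = (∑ k, |g (x k)| ^ p) ^ (1 / p)} with hΦ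
    have h0Φ : (0:ℝ) ∈ Φ := by
      refine ⟨0, by simp, ?_⟩
      simp [Real.zero_rpow hpne, Real.zero_rpow (one_div_ne_zero hpne), Real.zero_rpow (inv_ne_zero hpne)]
    have hbddΦ : BddAbove Φ := by
      refine ⟨(∑ k, ‖x k‖ ^ p) ^ (1 / p), ?_⟩
      rintro s ⟨g, hg, rfl⟩
      refine Real.rpow_le_rpow (by positivity) ?_ (by positivity)
      refine Finset.sum_le_sum fun k _ => ?_
      refine Real.rpow_le_rpow (abs_nonneg _) ?_ hp0.le
      calc |g (x k)| = ‖g (x k)‖ := (Real.norm_eq_abs _).symm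
        _ ≤ ‖g‖ * ‖x k‖ := g.le_opNorm _
        _ ≤ 1 * ‖x k‖ := by gcongr
        _ = ‖x k‖ := one_mul _
    set S := sSup Φ with hSdef
    have hS0 : 0 ≤ S := le_csSup hbddΦ h0Φ
    have hmemS : ∀ g : X →L[ℝ] ℝ, ‖g‖ ≤ 1 → (∑ k, |g (x k)| ^ p) ^ (1 / p) ≤ S :=
      fun g hg => le_csSup hbddΦ ⟨g, hg, rfl⟩
    -- norming functional
    have claimN : ∀ a : Fin n → ℝ, ∃ g : X →L[ℝ] ℝ, ‖g‖ ≤ 1 ∧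
        ‖∑ k, a k • x k‖ = ∑ k, a k * g (x k) := by
      intro a
      obtain ⟨g, hg1, hg2⟩ := exists_dual_vector'' ℝ (∑ k, a k • x k)
      refine ⟨g, hg1, ?_⟩
      rw [show ‖∑ k, a k • x k‖ = g (∑ k, a k • x k) from by exact_mod_cast hg2.symm, map_sum]
      exact Finset.sum_congr rfl fun k _ => by rw [_root_.map_smul, smul_eq_mul]
    -- a.e. identity for linear combinations
    have haeq : ∀ a : Fin n → ℝ,
        ⇑(T (∑ k, a k • x k)) =ᵐ[m] fun ω => ∑ k, a k * c k ω := by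
      intro a
      have h1 : T (∑ k, a k • x k) = ∑ k, a k • T (x k) := by
        rw [map_sum]; exact Finset.sum_congr rfl fun k _ => by rw [_root_.map_smul]
      rw [h1]
      have h3 : ∀ᵐ ω ∂m, ∀ k : Fin n, (a k • T (x k)) ω = a k * c k ω := by
        rw [ae_all_iff]
        intro k
        filter_upwards [Lp.coeFn_smul (a k) (T (x k))] with ω hω
        simpa using hω
      filter_upwards [Lp_coeFn_sum Finset.univ (fun k => a k • T (x k)), h3] with ω hω2 hω3
      rw [hω2]
      exact Finset.sum_congr rfl fun k _ => hω3 k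
    -- Step 3: a.e. simultaneous bound over all real coefficient vectors
    have step3 : ∀ᵐ ω ∂m, ∀ a : Fin n → ℝ,
        |∑ k, a k * c k ω| ≤ h ω * ‖∑ k, a k • x k‖ := by
      have hrat : ∀ᵐ ω ∂m, ∀ q : Fin n → ℚ,
          |∑ k, (q k : ℝ) * c k ω| ≤ h ω * ‖∑ k, (q k : ℝ) • x k‖ := by
        rw [ae_all_iff]
        intro q
        filter_upwards [step1 (∑ k, (q k : ℝ) • x k), haeq fun k => (q k : ℝ)] with ω h1 h2
        rw [← h2]; exact h1
      filter_upwards [hrat] with ω hω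
      intro a
      set E : Set (Fin n → ℝ) :=
        {a | |∑ k, a k * c k ω| ≤ h ω * ‖∑ k, a k • x k‖} with hE
      have hclosed : IsClosed E := by
        apply isClosed_le
        · exact continuous_abs.comp (continuous_finset_sum _ fun k _ =>
            (continuous_apply k).mul continuous_const)
        · exact continuous_const.mul ((continuous_finset_sum _ fun k _ =>
            (continuous_apply k).smul continuous_const).norm)
      have hdense : Dense (Set.pi Set.univ fun _ : Fin n => Set.range ((↑) : ℚ → ℝ)) :=
        dense_pi Set.univ fun i _ => Rat.denseRange_cast
      have hsub : (Set.pi Set.univ fun _ : Fin n => Set.range ((↑) : ℚ → ℝ)) ⊆ E := by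
        intro b hb
        choose q hq using fun k => hb k (Set.mem_univ k)
        have hbq : b = fun k => (q k : ℝ) := funext fun k => (hq k).symm
        rw [hE, Set.mem_setOf_eq, hbq]
        exact hω q
      have : a ∈ E := by
        have h1 := hdense a
        have h2 : closure (Set.pi Set.univ fun _ : Fin n => Set.range ((↑) : ℚ → ℝ)) ⊆ E :=
          hclosed.closure_eq ▸ closure_mono hsub
        exact h2 h1
      exact this
    -- Step 4: pointwise a.e. bound on the p-sum
    have step4 : ∀ᵐ ω ∂m, ∑ k, |c k ω| ^ p ≤ (h ω * S) ^ p := by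
      filter_upwards [step3] with ω hω
      set a : Fin n → ℝ := fun k => if c k ω = 0 then 0 else |c k ω| ^ p / c k ω with hadef
      have hac : ∀ k, a k * c k ω = |c k ω| ^ p := by
        intro k
        by_cases hk : c k ω = 0
        · simp [hadef, hk, Real.zero_rpow hpne]
        · simp only [hadef, if_neg hk]; field_simp
      have haabs : ∀ k, |a k| ≤ |c k ω| ^ (p - 1) := by
        intro k
        by_cases hk : c k ω = 0
        · simp only [hadef, if_pos hk, abs_zero]
          exact Real.rpow_nonneg (abs_nonneg _) _
        · have hck : (0:ℝ) < |c k ω| := abs_pos.mpr hk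
          have : |a k| = |c k ω| ^ p / |c k ω| := by
            simp only [hadef, if_neg hk, abs_div,
              abs_of_nonneg (Real.rpow_nonneg (abs_nonneg _) p)]
          rw [this, Real.rpow_sub hck, Real.rpow_one]
      set t := ∑ k, |c k ω| ^ p with ht
      have ht0 : 0 ≤ t := Finset.sum_nonneg fun k _ => Real.rpow_nonneg (abs_nonneg _) _
      have hta : t = ∑ k, a k * c k ω := Finset.sum_congr rfl fun k _ => (hac k).symm
      obtain ⟨g, hg1, hg2⟩ := claimN a
      have hkey : t ≤ h ω * ∑ k, a k * g (x k) := by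
        calc t = |∑ k, a k * c k ω| := by rw [← hta]; exact (abs_of_nonneg ht0).symm
          _ ≤ h ω * ‖∑ k, a k • x k‖ := hω a
          _ = h ω * ∑ k, a k * g (x k) := by rw [hg2]
      have hsum : ∑ k, a k * g (x k) ≤ S * t ^ (1 - 1 / p) := by
        rcases eq_or_lt_of_le hp with hp1 | hp1
        · -- p = 1
          have hS1 : ∑ k, |g (x k)| ≤ S := by
            have := hmemS g hg1
            rw [← hp1] at this
            simpa using this
          have : ∑ k, a k * g (x k) ≤ ∑ k, |g (x k)| := by
            refine Finset.sum_le_sum fun k _ => ?_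
            calc a k * g (x k) ≤ |a k * g (x k)| := le_abs_self _
              _ = |a k| * |g (x k)| := abs_mul _ _
              _ ≤ 1 * |g (x k)| := by
                  refine mul_le_mul_of_nonneg_right ?_ (abs_nonneg _)
                  have := haabs k
                  rwa [← hp1, sub_self, Real.rpow_zero] at this
              _ = |g (x k)| := one_mul _
          have h0 : S * t ^ ((1:ℝ) - 1/1) = S := by
            norm_num
          rw [← hp1, h0]
          exact this.trans hS1
        · -- 1 < p
          have hq : p.HolderConjugate (Real.conjExponent p) :=
            Real.HolderConjugate.conjExponent hp1
          set q := Real.conjExponent p with hqdef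
          have h1 : ∑ k, a k * g (x k) ≤
              (∑ k, |a k| ^ q) ^ (1 / q) * (∑ k, |g (x k)| ^ p) ^ (1 / p) :=
            Real.inner_le_Lp_mul_Lq Finset.univ a (fun k => g (x k)) hq.symm
          have h2 : (∑ k, |a k| ^ q) ^ (1 / q) ≤ t ^ (1 / q) := by
            refine Real.rpow_le_rpow (by positivity) ?_ hq.symm.one_div_nonneg
            refine Finset.sum_le_sum fun k _ => ?_
            calc |a k| ^ q ≤ (|c k ω| ^ (p - 1)) ^ q :=
                Real.rpow_le_rpow (abs_nonneg _) (haabs k) hq.symm.nonneg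
              _ = |c k ω| ^ ((p - 1) * q) := by
                  rw [← Real.rpow_mul (abs_nonneg _)]
              _ = |c k ω| ^ p := by rw [hq.sub_one_mul_conj]
          have h3 : (∑ k, |g (x k)| ^ p) ^ (1 / p) ≤ S := hmemS g hg1
          have h4 : (1 : ℝ) / q = 1 - 1 / p := by
            rw [one_div, one_div, hq.one_sub_inv]
          calc ∑ k, a k * g (x k)
              ≤ (∑ k, |a k| ^ q) ^ (1 / q) * (∑ k, |g (x k)| ^ p) ^ (1 / p) := h1
            _ ≤ t ^ (1 / q) * S := by
                exact mul_le_mul h2 h3 (by positivity) (Real.rpow_nonneg ht0 _)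
            _ = S * t ^ (1 - 1 / p) := by rw [h4, mul_comm]
      -- combine
      rcases eq_or_lt_of_le ht0 with ht0' | htpos
      · rw [← ht0']
        exact Real.rpow_nonneg (mul_nonneg (hpos ω) hS0) _
      · have hcomb : t ≤ (h ω * S) * t ^ (1 - 1 / p) := by
          calc t ≤ h ω * (S * t ^ (1 - 1 / p)) :=
              hkey.trans (mul_le_mul_of_nonneg_left hsum (hpos ω))
            _ = (h ω * S) * t ^ (1 - 1 / p) := by ring
        have hu : (0:ℝ) < t ^ (1 - 1 / p) := Real.rpow_pos_of_pos htpos _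
        have hsplit : t = t ^ (1 / p) * t ^ (1 - 1 / p) := by
          rw [← Real.rpow_add htpos]
          norm_num
        have h5 : t ^ (1 / p) ≤ h ω * S := by
          refine le_of_mul_le_mul_right ?_ hu
          rw [← hsplit]
          exact hcomb
        calc t = (t ^ (1 / p)) ^ p := by
              rw [← Real.rpow_mul ht0, one_div, inv_mul_cancel₀ hpne, Real.rpow_one]
          _ ≤ (h ω * S) ^ p :=
              Real.rpow_le_rpow (Real.rpow_nonneg ht0 _) h5 hp0.le
    -- norms as integrals
    have hInt : ∀ k : Fin n, Integrable (fun ω => |c k ω| ^ p) m := by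
      intro k
      have h1 := (Lp.memLp (T (x k))).integrable_norm_rpow hpe0 hpetop
      rw [hper] at h1
      simpa [Real.norm_eq_abs] using h1
    have hnorm : ∀ k : Fin n, ‖T (x k)‖ ^ p = ∫ ω, |c k ω| ^ p ∂m := by
      intro k
      have hA : 0 ≤ ∫ ω, |c k ω| ^ p ∂m :=
        integral_nonneg fun ω => Real.rpow_nonneg (abs_nonneg _) _
      have h1 : ‖T (x k)‖ = (∫ ω, |c k ω| ^ p ∂m) ^ p⁻¹ := by
        rw [Lp.norm_def, (Lp.memLp (T (x k))).eLpNorm_eq_integral_rpow_norm hpe0 hpetop, hper,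
          ENNReal.toReal_ofReal (Real.rpow_nonneg
            (integral_nonneg fun ω => Real.rpow_nonneg (norm_nonneg _) _) _)]
        simp [Real.norm_eq_abs]; rfl
      rw [h1, ← Real.rpow_mul hA, inv_mul_cancel₀ hpne, Real.rpow_one]
    have hIntSum : Integrable (fun ω => ∑ k, |c k ω| ^ p) m :=
      integrable_finset_sum _ fun k _ => hInt k
    have hfun : (fun ω => (h ω * S) ^ p) = fun ω => h ω ^ p * S ^ p :=
      funext fun ω => Real.mul_rpow (hpos ω) hS0
    have hIntRHS : Integrable (fun ω => (h ω * S) ^ p) m := by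
      rw [hfun]; exact hLp.mul_const _
    have hle : ∫ ω, ∑ k, |c k ω| ^ p ∂m ≤ ∫ ω, (h ω * S) ^ p ∂m :=
      integral_mono_ae hIntSum hIntRHS step4
    have hRHS : ∫ ω, (h ω * S) ^ p ∂m = (∫ ω, h ω ^ p ∂m) * S ^ p := by
      rw [hfun]; exact integral_mul_const _ _
    calc (∑ k, ‖T (x k)‖ ^ p) ^ (1 / p)
        = (∫ ω, ∑ k, |c k ω| ^ p ∂m) ^ (1 / p) := by
          congr 1
          rw [integral_finset_sum _ fun k _ => hInt k]
          exact Finset.sum_congr rfl fun k _ => hnorm k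
      _ ≤ ((∫ ω, h ω ^ p ∂m) * S ^ p) ^ (1 / p) := by
          refine Real.rpow_le_rpow ?_ (hle.trans_eq hRHS) (by positivity)
          exact integral_nonneg fun ω =>
            Finset.sum_nonneg fun k _ => Real.rpow_nonneg (abs_nonneg _) _
      _ = C * S := by
          rw [Real.mul_rpow hInt0 (Real.rpow_nonneg hS0 _), hC, one_div,
            Real.rpow_rpow_inv hS0 hpne]
  exact ⟨⟨C, hC0, key⟩, csInf_le ⟨0, fun y hy => hy.1⟩ ⟨hC0, key⟩⟩
end
end
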